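/- Let λ₁ > 0, W₂ > 0, W₃ > 0 and Γ > 0. Then ∫₀^∞ λ₁ e^{−λ₁ x} ( ∫₀^Γ W₂ e^{−W₂ z} (1 − e^{−2W₃ (Γ − z)/x}) dz ) dx = (1 − e^{−W₂ Γ}) + λ₁·W₂·∫₀^∞ x e^{−λ₁ x} (e^{−W₂ Γ} − e^{−2W₃ Γ/x})/(x W₂ − 2W₃) dx. (At the single point x = 2W₃/W₂ the integrand of the last integral has a removable singularity; since this is a set of measure zero it does not affect the Lebesgue integrals.) -/

import Mathlib

open Real MeasureTheory Set

private lemma exp_sub_exp_abs_le {a b : ℝ} (ha : a ≤ 0) (hb : b ≤ 0) :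
    |Real.exp a - Real.exp b| ≤ |a - b| := by
  wlog h : b ≤ a generalizing a b
  · rw [abs_sub_comm, abs_sub_comm a b]; exact this hb ha (le_of_not_ge h)
  have hba : Real.exp b ≤ Real.exp a := Real.exp_le_exp.mpr h
  rw [abs_of_nonneg (by linarith), abs_of_nonneg (by linarith)]
  have h1 : Real.exp b = Real.exp a * Real.exp (b - a) := by
    rw [← Real.exp_add]; ring_nf
  have h2 : (b - a) + 1 ≤ Real.exp (b - a) := Real.add_one_le_exp _
  have h3 : Real.exp a ≤ 1 := Real.exp_le_one_iff.mpr ha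
  nlinarith [Real.exp_pos a]

private lemma inner_int (W2 W3 Γ : ℝ) (hW2 : 0 < W2) (hW3 : 0 < W3) {x : ℝ} (hx : 0 < x)
    (hne : x * W2 - 2 * W3 ≠ 0) :
    (∫ z in (0:ℝ)..Γ, W2 * Real.exp (-W2 * z) * (1 - Real.exp (-2 * W3 * (Γ - z) / x)))
      = (1 - Real.exp (-W2 * Γ))
        + W2 * x * (Real.exp (-W2 * Γ) - Real.exp (-2 * W3 * Γ / x)) / (x * W2 - 2 * W3) := by
  have hx0 : x ≠ 0 := hx.ne'
  set c : ℝ := 2 * W3 / x - W2 with hc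
  have hcne : c ≠ 0 := by
    rw [hc]
    intro h
    apply hne
    field_simp at h
    linarith
  have key : ∀ z : ℝ, HasDerivAt (fun z => -Real.exp (-W2 * z)
      - W2 / c * Real.exp (-2 * W3 * Γ / x) * Real.exp (c * z))
      (W2 * Real.exp (-W2 * z) * (1 - Real.exp (-2 * W3 * (Γ - z) / x))) z := by
    intro z
    have h1 : HasDerivAt (fun z : ℝ => Real.exp (-W2 * z)) (Real.exp (-W2 * z) * (-W2)) z := by
      simpa using (((hasDerivAt_id z).const_mul (-W2)).exp)
    have h2 : HasDerivAt (fun z : ℝ => Real.exp (c * z)) (Real.exp (c * z) * c) z := by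
      simpa using (((hasDerivAt_id z).const_mul c).exp)
    have h3 := (h1.neg).sub ((h2.const_mul (W2 / c * Real.exp (-2 * W3 * Γ / x))))
    have harr : -(Real.exp (-W2 * z) * (-W2)) - W2 / c * Real.exp (-2 * W3 * Γ / x)
        * (Real.exp (c * z) * c)
        = W2 * Real.exp (-W2 * z) * (1 - Real.exp (-2 * W3 * (Γ - z) / x)) := by
      have he : Real.exp (-2 * W3 * Γ / x) * Real.exp (c * z)
          = Real.exp (-W2 * z) * Real.exp (-2 * W3 * (Γ - z) / x) := by
        rw [← Real.exp_add, ← Real.exp_add]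
        congr 1
        rw [hc]; field_simp; ring
      have hc2 : W2 / c * Real.exp (-2 * W3 * Γ / x) * (Real.exp (c * z) * c)
          = W2 * (Real.exp (-2 * W3 * Γ / x) * Real.exp (c * z)) := by
        field_simp
      rw [hc2, he]; ring
    have h4 : HasDerivAt (fun z => -Real.exp (-W2 * z)
        - W2 / c * Real.exp (-2 * W3 * Γ / x) * Real.exp (c * z))
        (-(Real.exp (-W2 * z) * (-W2)) - W2 / c * Real.exp (-2 * W3 * Γ / x)
          * (Real.exp (c * z) * c)) z := by
      exact h3
    rw [harr] at h4
    exact h4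
  have hcont : Continuous (fun z : ℝ =>
      W2 * Real.exp (-W2 * z) * (1 - Real.exp (-2 * W3 * (Γ - z) / x))) := by
    fun_prop
  rw [intervalIntegral.integral_eq_sub_of_hasDerivAt (fun z _ => key z)
    (hcont.intervalIntegrable 0 Γ)]
  have he1 : W2 / c * Real.exp (-2 * W3 * Γ / x) * Real.exp (c * Γ)
      = W2 / c * Real.exp (-W2 * Γ) := by
    rw [mul_assoc, ← Real.exp_add]
    congr 2
    rw [hc]; field_simp; ring
  have hq : x * W2 - 2 * W3 = -(x * c) := by rw [hc]; field_simp; ring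
  clear_value c
  rw [hq, he1]
  simp only [mul_zero, Real.exp_zero, mul_one, neg_zero]
  field_simp
  ring

/-- Outage probability term for the harvest-use (HU) architecture.  (The possible
singularity of the last integrand at `x = 2W₃/W₂` is a removable one on a
measure-zero set.) -/
theorem stmt11 (lam W2 W3 Γ : ℝ) (hlam : 0 < lam) (hW2 : 0 < W2) (hW3 : 0 < W3)
    (hΓ : 0 < Γ) :
    (∫ x in Set.Ioi (0:ℝ), lam * Real.exp (-lam * x) *
        ∫ z in (0:ℝ)..Γ, W2 * Real.exp (-W2 * z) * (1 - Real.exp (-2 * W3 * (Γ - z) / x)))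
      = (1 - Real.exp (-W2 * Γ))
        + lam * W2 * ∫ x in Set.Ioi (0:ℝ),
            x * Real.exp (-lam * x) * (Real.exp (-W2 * Γ) - Real.exp (-2 * W3 * Γ / x))
              / (x * W2 - 2 * W3) := by
  set g : ℝ → ℝ := fun x =>
    x * Real.exp (-lam * x) * (Real.exp (-W2 * Γ) - Real.exp (-2 * W3 * Γ / x))
      / (x * W2 - 2 * W3) with hg
  -- integrability of the constant part
  have hInt1 : IntegrableOn
      (fun x : ℝ => lam * Real.exp (-lam * x) * (1 - Real.exp (-W2 * Γ))) (Ioi 0) :=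
    ((exp_neg_integrableOn_Ioi 0 hlam).const_mul lam).mul_const _
  -- integrability of g via domination by Γ * exp (-lam x)
  have hIntBound : IntegrableOn (fun x : ℝ => Γ * Real.exp (-lam * x)) (Ioi 0) :=
    (exp_neg_integrableOn_Ioi 0 hlam).const_mul Γ
  have hgmeas : AEStronglyMeasurable g (volume.restrict (Ioi 0)) := by
    apply Measurable.aestronglyMeasurable
    apply Measurable.div
    · fun_prop
    · fun_prop
  have hbound : ∀ x ∈ Ioi (0:ℝ), ‖g x‖ ≤ Γ * Real.exp (-lam * x) := by
    intro x hx
    have hx0 : (0:ℝ) < x := hx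
    by_cases hq : x * W2 - 2 * W3 = 0
    · rw [hg]
      simp only [hq, div_zero, norm_zero]
      positivity
    · have ha : -W2 * Γ ≤ 0 := by nlinarith
      have hb : -2 * W3 * Γ / x ≤ 0 := by
        apply div_nonpos_of_nonpos_of_nonneg <;> nlinarith
      have hd : |Real.exp (-W2 * Γ) - Real.exp (-2 * W3 * Γ / x)|
          ≤ Γ * |x * W2 - 2 * W3| / x := by
        refine (exp_sub_exp_abs_le ha hb).trans ?_
        have : -W2 * Γ - -2 * W3 * Γ / x = -((x * W2 - 2 * W3) * Γ) / x := by
          field_simp; ring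
        rw [this, abs_div, abs_neg, abs_mul, abs_of_pos hx0, abs_of_pos hΓ]
        rw [div_le_div_iff₀ hx0 hx0]
        ring_nf
        exact le_refl _
      have hqpos : 0 < |x * W2 - 2 * W3| := abs_pos.mpr hq
      rw [hg]
      rw [Real.norm_eq_abs, abs_div, abs_mul, abs_mul, abs_of_pos hx0,
        abs_of_pos (Real.exp_pos _)]
      rw [div_le_iff₀ hqpos]
      calc x * Real.exp (-lam * x) * |Real.exp (-W2 * Γ) - Real.exp (-2 * W3 * Γ / x)|
          ≤ x * Real.exp (-lam * x) * (Γ * |x * W2 - 2 * W3| / x) := by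
            apply mul_le_mul_of_nonneg_left hd; positivity
        _ = Γ * Real.exp (-lam * x) * |x * W2 - 2 * W3| := by field_simp
  have hIntg : IntegrableOn g (Ioi 0) := by
    apply Integrable.mono' hIntBound hgmeas
    rw [ae_restrict_iff' measurableSet_Ioi]
    exact Filter.Eventually.of_forall hbound
  -- pointwise (a.e.) identity for the integrand
  have h0 : ∀ᵐ x : ℝ, x ≠ 2 * W3 / W2 := by
    have : (volume : Measure ℝ) {2 * W3 / W2} = 0 := measure_singleton _
    have h' := compl_mem_ae_iff.mpr this
    filter_upwards [h'] with x hx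
    simpa using hx
  have hcong : (∫ x in Ioi (0:ℝ), lam * Real.exp (-lam * x) *
        ∫ z in (0:ℝ)..Γ, W2 * Real.exp (-W2 * z) * (1 - Real.exp (-2 * W3 * (Γ - z) / x)))
      = ∫ x in Ioi (0:ℝ),
          (lam * Real.exp (-lam * x) * (1 - Real.exp (-W2 * Γ)) + lam * W2 * g x) := by
    apply setIntegral_congr_ae measurableSet_Ioi
    filter_upwards [h0] with x hxne hx
    have hx0 : (0:ℝ) < x := hx
    have hq : x * W2 - 2 * W3 ≠ 0 := by
      intro h
      apply hxne
      field_simp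
      linarith
    rw [inner_int W2 W3 Γ hW2 hW3 hx0 hq, hg]
    field_simp
  rw [hcong, integral_add hInt1 (hIntg.const_mul (lam * W2)),
    integral_const_mul]
  have hA : (∫ x in Ioi (0:ℝ), lam * Real.exp (-lam * x) * (1 - Real.exp (-W2 * Γ)))
      = 1 - Real.exp (-W2 * Γ) := by
    rw [integral_mul_const, integral_const_mul]
    have : (∫ x in Ioi (0:ℝ), Real.exp (-lam * x)) = lam⁻¹ := by
      have h := integral_comp_mul_left_Ioi (fun y => Real.exp (-y)) 0 hlam
      simp only [mul_zero, integral_exp_neg_Ioi, neg_zero, Real.exp_zero, smul_eq_mul,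
        mul_one] at h
      simpa [neg_mul] using h
    rw [this]
    field_simp
  rw [hA]
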